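/- arXiv:1108.0440 — 2 statements merged into one kernel-verified Lean document; each statement's English description precedes it below -/
import Mathlib

section
/- Let $N \geq 2$ and define $\mathcal{W} = \lfloor w(N) \log N / \log\log N \rfloor$ and $\mathcal{T} = w(N)^{-1/2} \log\log N$, where $w$ is a positive increasing function with $w(N) \to \infty$ and $w(N)/\log\log N \to 0$ as $N \to \infty$. Then for any fixed constants $\mu, \gamma > 0$, the quantity $x_N = \log N + \mathcal{T}(\gamma\mathcal{W} + 1 + \mu e^{\gamma\mathcal{T}}) + 2\mathcal{W}(\log(\mathcal{T}\mu e^{\gamma\mathcal{T}}) + 1) - (2\mathcal{W}+1)\log(2\mathcal{W}) - \tfrac{1}{2}\log(4\pi\mathcal{W})$ satisfies $x_N \to -\infty$ as $N \to \infty$; in fact $x_N \sim -2 w(N) \log N$. -/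
open Real Filter Asymptotics

lemma sqrt_tendsto_atTop' : Tendsto Real.sqrt atTop atTop := by
  apply tendsto_atTop_atTop.mpr
  intro b
  refine ⟨(max 0 b) ^ 2, fun a ha => ?_⟩
  have h1 : max 0 b ≤ Real.sqrt a := by
    rw [← Real.sqrt_sq (le_max_left 0 b)]
    exact Real.sqrt_le_sqrt ha
  exact le_trans (le_max_right 0 b) h1

set_option maxHeartbeats 2000000 in
/-- With `𝒲 = ⌊w(N) log N / log log N⌋` and `𝒯 = w(N)^{-1/2} log log N`,
where `w` is positive, increasing, `w(N) → ∞` and `w(N)/log log N → 0`, the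
quantity
`x_N = log N + 𝒯(γ𝒲 + 1 + μ e^{γ𝒯}) + 2𝒲(log(𝒯 μ e^{γ𝒯}) + 1)
       - (2𝒲+1) log(2𝒲) - (1/2) log(4π𝒲)`
tends to `-∞`; in fact `x_N ∼ -2 w(N) log N`. -/
theorem stirling_exponent_asymptotics
    (μ γ : ℝ) (hμ : 0 < μ) (hγ : 0 < γ)
    (w : ℕ → ℝ) (hwpos : ∀ N, 0 < w N) (hwmono : Monotone w)
    (hwtop : Tendsto w atTop atTop)
    (hwsmall : Tendsto (fun N : ℕ => w N / Real.log (Real.log N)) atTop (nhds 0)) :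
    let 𝒲 : ℕ → ℝ := fun N => (⌊w N * Real.log N / Real.log (Real.log N)⌋ : ℤ)
    let 𝒯 : ℕ → ℝ := fun N => Real.log (Real.log N) / Real.sqrt (w N)
    let x : ℕ → ℝ := fun N =>
      Real.log N + 𝒯 N * (γ * 𝒲 N + 1 + μ * exp (γ * 𝒯 N)) +
        2 * 𝒲 N * (Real.log (𝒯 N * μ * exp (γ * 𝒯 N)) + 1) -
        (2 * 𝒲 N + 1) * Real.log (2 * 𝒲 N) -
        (1 / 2) * Real.log (4 * Real.pi * 𝒲 N)
    Tendsto x atTop atBot ∧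
      x ~[atTop] (fun N => -2 * w N * Real.log N) := by
  intro 𝒲 𝒯 x
  set L : ℕ → ℝ := fun N => Real.log N with hLdef
  set LL : ℕ → ℝ := fun N => Real.log (Real.log N) with hLLdef
  set a : ℕ → ℝ := fun N => w N * Real.log N / Real.log (Real.log N) with hadef
  have h𝒲 : ∀ N, 𝒲 N = ((⌊a N⌋ : ℤ) : ℝ) := fun _ => rfl
  have h𝒯 : ∀ N, 𝒯 N = LL N / Real.sqrt (w N) := fun _ => rfl
  -- basic limits
  have hL : Tendsto L atTop atTop :=
    Real.tendsto_log_atTop.comp tendsto_natCast_atTop_atTop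
  have hLL : Tendsto LL atTop atTop := Real.tendsto_log_atTop.comp hL
  have hlogdiv : Tendsto (fun y : ℝ => Real.log y / y) atTop (nhds 0) :=
    Real.isLittleO_log_id_atTop.tendsto_div_nhds_zero
  have f5 : Tendsto (fun N => LL N / L N) atTop (nhds 0) := hlogdiv.comp hL
  have hLLpos : ∀ᶠ N : ℕ in atTop, 0 < LL N := hLL.eventually_gt_atTop 0
  have hLpos : ∀ᶠ N : ℕ in atTop, 1 < L N := hL.eventually_gt_atTop 1
  have hw1 : ∀ᶠ N : ℕ in atTop, 1 ≤ w N := hwtop.eventually_ge_atTop 1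
  have hLoverLL : Tendsto (fun N => L N / LL N) atTop atTop := by
    have h1 : Tendsto (fun N => LL N / L N) atTop (nhdsWithin 0 (Set.Ioi 0)) := by
      rw [tendsto_nhdsWithin_iff]
      refine ⟨f5, ?_⟩
      filter_upwards [hLLpos, hLpos] with N h1 h2
      exact div_pos h1 (lt_trans one_pos h2)
    have h2 := tendsto_inv_nhdsGT_zero.comp h1
    refine h2.congr fun N => ?_
    simp [inv_div]
  have ha : Tendsto a atTop atTop := by
    have h : Tendsto (fun N => w N * (L N / LL N)) atTop atTop :=
      hwtop.atTop_mul_atTop₀ hLoverLL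
    refine h.congr fun N => ?_
    simp [hadef, hLdef, hLLdef, mul_div_assoc]
  -- floor facts
  have hfl : ∀ N, a N - 1 ≤ 𝒲 N := fun N => by
    rw [h𝒲]; exact le_of_lt (Int.sub_one_lt_floor (a N))
  have hfu : ∀ N, 𝒲 N ≤ a N := fun N => by rw [h𝒲]; exact Int.floor_le (a N)
  have h𝒲top : Tendsto 𝒲 atTop atTop :=
    tendsto_atTop_mono hfl (ha.atTop_add tendsto_const_nhds)
  have f2 : Tendsto (fun N => 𝒲 N / a N) atTop (nhds 1) := by
    have hainv : Tendsto (fun N => (a N)⁻¹) atTop (nhds 0) := ha.inv_tendsto_atTop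
    have hlow : Tendsto (fun N => 1 - (a N)⁻¹) atTop (nhds 1) := by
      simpa using tendsto_const_nhds.sub hainv
    refine tendsto_of_tendsto_of_tendsto_of_le_of_le' hlow tendsto_const_nhds ?_ ?_
    · filter_upwards [ha.eventually_ge_atTop 1] with N h1
      have ha0 : 0 < a N := lt_of_lt_of_le one_pos h1
      have h2 : (1 : ℝ) - (a N)⁻¹ = (a N - 1) / a N := by field_simp
      rw [h2]
      exact (div_le_div_iff_of_pos_right ha0).2 (hfl N)
    · filter_upwards [ha.eventually_ge_atTop 1] with N h1
      exact (div_le_one (lt_of_lt_of_le one_pos h1)).2 (hfu N)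
  have hsw : Tendsto (fun N => Real.sqrt (w N)) atTop atTop :=
    sqrt_tendsto_atTop'.comp hwtop
  have f3 : Tendsto (fun N => (Real.sqrt (w N))⁻¹) atTop (nhds 0) := hsw.inv_tendsto_atTop
  have f1 : Tendsto (fun N => (w N)⁻¹) atTop (nhds 0) := hwtop.inv_tendsto_atTop
  have f9 : Tendsto (fun N => (LL N)⁻¹) atTop (nhds 0) := hLL.inv_tendsto_atTop
  have hlogLLdiv : Tendsto (fun N => Real.log (LL N) / LL N) atTop (nhds 0) :=
    hlogdiv.comp hLL
  -- log w / LL → 0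
  have hlogwLL : Tendsto (fun N => Real.log (w N) / LL N) atTop (nhds 0) := by
    have hwleLL : ∀ᶠ N : ℕ in atTop, w N ≤ LL N := by
      filter_upwards [hwsmall.eventually_lt_const one_pos, hLLpos,
        hwtop.eventually_ge_atTop 0] with N h1 h2 h3
      nlinarith [(div_lt_one h2).1 h1]
    refine tendsto_of_tendsto_of_tendsto_of_le_of_le' tendsto_const_nhds hlogLLdiv ?_ ?_
    · filter_upwards [hw1, hLLpos] with N h1 h2
      exact div_nonneg (Real.log_nonneg h1) h2.le
    · filter_upwards [hwleLL, hLLpos, hw1] with N h1 h2 h3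
      exact (div_le_div_iff_of_pos_right h2).2
        (Real.log_le_log (lt_of_lt_of_le one_pos h3) h1)
  -- log 𝒯 / LL → 0
  have f7 : Tendsto (fun N => Real.log (𝒯 N) / LL N) atTop (nhds 0) := by
    have h := hlogLLdiv.sub ((hlogwLL).div_const 2)
    norm_num at h
    refine h.congr' ?_
    filter_upwards [hLLpos, hw1] with N h1 h2
    have hw0 : 0 < w N := lt_of_lt_of_le one_pos h2
    have hs0 : 0 < Real.sqrt (w N) := Real.sqrt_pos.2 hw0
    rw [h𝒯, Real.log_div h1.ne' hs0.ne', Real.log_sqrt hw0.le]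
    ring
  -- log 𝒲 / LL → 1
  have hlogr : Tendsto (fun N => Real.log (𝒲 N / a N)) atTop (nhds 0) := by
    have h := (Real.continuousAt_log one_ne_zero).tendsto.comp f2
    simpa [Function.comp_def] using h
  have f8 : Tendsto (fun N => Real.log (𝒲 N) / LL N) atTop (nhds 1) := by
    have h := (((hlogr.mul f9).add hlogwLL).add
      (tendsto_const_nhds : Tendsto (fun _ : ℕ => (1:ℝ)) atTop (nhds 1))).sub hlogLLdiv
    norm_num at h
    refine h.congr' ?_
    filter_upwards [hLLpos, hLpos, hw1, ha.eventually_ge_atTop 1] with N h1 h2 h3 h4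
    have hw0 : 0 < w N := lt_of_lt_of_le one_pos h3
    have hL0 : 0 < L N := lt_trans one_pos h2
    have ha0 : 0 < a N := lt_of_lt_of_le one_pos h4
    have h𝒲1 : (1 : ℝ) ≤ 𝒲 N := by
      rw [h𝒲]
      exact_mod_cast Int.le_floor.2 (by exact_mod_cast h4)
    have h𝒲0 : 0 < 𝒲 N := lt_of_lt_of_le one_pos h𝒲1
    have hr0 : 𝒲 N / a N ≠ 0 := (div_pos h𝒲0 ha0).ne'
    have key : Real.log (𝒲 N) = Real.log (𝒲 N / a N) + Real.log (a N) := by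
      rw [← Real.log_mul hr0 ha0.ne', div_mul_cancel₀ _ ha0.ne']
    have hloga : Real.log (a N) = Real.log (w N) + LL N - Real.log (LL N) := by
      rw [hadef]
      simp only
      rw [Real.log_div (mul_pos hw0 hL0).ne' h1.ne', Real.log_mul hw0.ne' hL0.ne']
    rw [key, hloga]
    field_simp
    ring
  -- 𝒯 exp(γ𝒯) / L → 0
  have hE : Tendsto (fun N => 𝒯 N * Real.exp (γ * 𝒯 N) / L N) atTop (nhds 0) := by
    have hfac : Tendsto
        (fun N => γ * (Real.sqrt (w N))⁻¹ + Real.log (𝒯 N) / LL N - 1) atTop (nhds (-1)) := by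
      have h := ((f3.const_mul γ).add f7).sub_const 1
      norm_num at h
      exact h
    have hexpo : Tendsto (fun N => LL N *
        (γ * (Real.sqrt (w N))⁻¹ + Real.log (𝒯 N) / LL N - 1)) atTop atBot :=
      Tendsto.atTop_mul_neg (by norm_num) hLL hfac
    have h := Real.tendsto_exp_atBot.comp hexpo
    refine h.congr' ?_
    filter_upwards [hLLpos, hLpos, hw1] with N h1 h2 h3
    have hw0 : 0 < w N := lt_of_lt_of_le one_pos h3
    have hs0 : 0 < Real.sqrt (w N) := Real.sqrt_pos.2 hw0
    have hL0 : 0 < L N := lt_trans one_pos h2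
    have h𝒯0 : 0 < 𝒯 N := by rw [h𝒯]; exact div_pos h1 hs0
    have hexp_eq : LL N * (γ * (Real.sqrt (w N))⁻¹ + Real.log (𝒯 N) / LL N - 1)
        = γ * 𝒯 N + Real.log (𝒯 N) - LL N := by
      rw [h𝒯]; field_simp
    show Real.exp (LL N * (γ * (Real.sqrt (w N))⁻¹ + Real.log (𝒯 N) / LL N - 1)) = _
    rw [hexp_eq, Real.exp_sub, Real.exp_add, Real.exp_log h𝒯0]
    have : Real.exp (LL N) = L N := Real.exp_log hL0
    rw [this]
    ring
  -- main ratio limit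
  have hx : Tendsto (fun N => x N / (w N * Real.log N)) atTop (nhds (-2)) := by
    have hG := (((((f1.add ((f2.mul f3).const_mul γ)).add ((f5.mul f3).mul f1)).add
      ((hE.const_mul μ).mul f1)).add
      ((f2.const_mul 2).mul ((f7.add (f9.const_mul (Real.log μ + 1))).add (f3.const_mul γ)))).sub
      (((f2.const_mul 2).add (f5.mul f1)).mul ((f9.const_mul (Real.log 2)).add f8))).sub
      (((f5.mul f1).const_mul (1/2)).mul ((f9.const_mul (Real.log (4*Real.pi))).add f8))
    rw [show (0 + γ*(1*0) + 0*0*0 + μ*0*0 + 2*1*(0+(Real.log μ+1)*0+γ*0)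
      - (2*1+0*0)*(Real.log 2*0+1) - 1/2*(0*0)*(Real.log (4*Real.pi)*0+1) : ℝ) = -2
      from by norm_num] at hG
    refine hG.congr' ?_
    filter_upwards [hLpos, hw1, ha.eventually_ge_atTop 1] with N h2 h3 h4
    have hw0 : 0 < w N := lt_of_lt_of_le one_pos h3
    have hL0 : (0:ℝ) < Real.log N := lt_trans one_pos h2
    have hLL0 : (0:ℝ) < Real.log (Real.log N) := Real.log_pos h2
    have hs0 : 0 < Real.sqrt (w N) := Real.sqrt_pos.2 hw0
    have ha0 : 0 < a N := lt_of_lt_of_le one_pos h4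
    have h𝒲1 : (1 : ℝ) ≤ 𝒲 N := by
      rw [h𝒲]
      exact_mod_cast Int.le_floor.2 (by exact_mod_cast h4)
    have h𝒲0 : 0 < 𝒲 N := lt_of_lt_of_le one_pos h𝒲1
    have hT0 : (0:ℝ) < Real.log (Real.log N) / Real.sqrt (w N) := div_pos hLL0 hs0
    simp only [x, 𝒯, hLdef, hLLdef, hadef]
    rw [Real.log_mul (mul_ne_zero hT0.ne' hμ.ne') (Real.exp_pos _).ne',
      Real.log_mul hT0.ne' hμ.ne', Real.log_exp,
      Real.log_mul (two_ne_zero) h𝒲0.ne',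
      Real.log_mul (by positivity : (4*Real.pi) ≠ 0) h𝒲0.ne']
    set s := Real.sqrt (w N) with hsdef
    have hs2 : s * s = w N := Real.mul_self_sqrt hw0.le
    rw [← hs2]
    have hsne : s ≠ 0 := hs0.ne'
    field_simp
    ring
  -- conclusions
  have hne : ∀ᶠ N : ℕ in atTop, (-2 * w N * Real.log N) ≠ 0 := by
    filter_upwards [hLpos] with N h2
    have hw0 := hwpos N
    have hL0 : (0:ℝ) < Real.log N := lt_trans one_pos h2
    have : -2 * w N * Real.log N < 0 := by nlinarith
    exact this.ne
  have hequiv : x ~[atTop] (fun N => -2 * w N * Real.log N) := by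
    refine (isEquivalent_iff_tendsto_one hne).2 ?_
    have h := hx.div_const (-2)
    rw [show ((-2:ℝ))/(-2) = 1 by norm_num] at h
    refine h.congr fun N => ?_
    rw [div_div]
    show x N / (w N * Real.log N * -2) = x N / (-2 * w N * Real.log N)
    congr 1
    ring
  have hvbot : Tendsto (fun N : ℕ => -2 * w N * Real.log N) atTop atBot := by
    have h := Tendsto.atTop_mul_neg (show (-2:ℝ) < 0 by norm_num)
      (hwtop.atTop_mul_atTop₀ hL) (tendsto_const_nhds)
    refine h.congr fun N => ?_
    show w N * Real.log N * (-2) = -2 * w N * Real.log N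
    ring
  exact ⟨hequiv.symm.tendsto_atBot hvbot, hequiv⟩
end

section
/- Let $\mu > 0$, $\gamma > 0$, $t \geq 0$, $W_0 \geq 0$, $N \geq 1$, and let $l \geq 1$ be an integer. Then $\sum_{i=0}^{\infty} \min\left( \frac{N(t\mu)^l e^{(\gamma(W_0+i+l)+1)t}}{l!}, \frac{N(t\mu)^i e^t}{i!} \right) \leq \frac{2N(t\mu)^l e^{(\gamma(W_0+2l)+\mu+1)t}}{(l-1)!}$. -/
open Real

lemma tsum_pow_div_factorial_eq (x : ℝ) : (∑' n : ℕ, x ^ n / n.factorial) = Real.exp x := by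
  rw [Real.exp_eq_exp_ℝ, NormedSpace.exp_eq_tsum_div]

lemma tail_tsum_le (x : ℝ) (hx : 0 ≤ x) (l : ℕ) :
    (∑' j : ℕ, x ^ (l + j) / (Nat.factorial (l + j))) ≤
      x ^ l / l.factorial * Real.exp x := by
  rw [← tsum_pow_div_factorial_eq x, ← tsum_mul_left]
  refine Summable.tsum_le_tsum (fun j => ?_) ?_ ?_
  · have hdvd : (l.factorial * j.factorial : ℕ) ≤ (l + j).factorial :=
      Nat.le_of_dvd (Nat.factorial_pos _) (Nat.factorial_mul_factorial_dvd_factorial_add l j)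
    rw [pow_add, div_mul_div_comm]
    apply div_le_div_of_nonneg_left (by positivity) (by positivity)
    exact_mod_cast hdvd
  · exact (Real.summable_pow_div_factorial x).comp_injective (add_right_injective l)
  · exact (Real.summable_pow_div_factorial x).mul_left _

/-- The summed minimum bound used in Proposition 3.2:
`∑_{i≥0} min( N(tμ)^l e^{(γ(W₀+i+l)+1)t}/l! , N(tμ)^i e^t/i! )
  ≤ 2N(tμ)^l e^{(γ(W₀+2l)+μ+1)t}/(l-1)!`. -/
theorem sum_min_branching_bound
    (μ γ t W₀ : ℝ) (hμ : 0 < μ) (hγ : 0 < γ) (ht : 0 ≤ t) (hW : 0 ≤ W₀)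
    (N : ℕ) (hN : 1 ≤ N) (l : ℕ) (hl : 1 ≤ l) :
    (∑' i : ℕ,
        min (N * (t * μ) ^ l * exp ((γ * (W₀ + i + l) + 1) * t) /
              (Nat.factorial l))
            (N * (t * μ) ^ i * exp t / (Nat.factorial i))) ≤
      2 * N * (t * μ) ^ l * exp ((γ * (W₀ + 2 * l) + μ + 1) * t) /
        (Nat.factorial (l - 1)) := by
  have hx : (0:ℝ) ≤ t * μ := by positivity
  have hN' : (1:ℝ) ≤ N := by exact_mod_cast hN
  set f : ℕ → ℝ := fun i =>
    min (N * (t * μ) ^ l * exp ((γ * (W₀ + i + l) + 1) * t) / (Nat.factorial l))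
        (N * (t * μ) ^ i * exp t / (Nat.factorial i)) with hf
  have hf_nonneg : ∀ i, 0 ≤ f i := by
    intro i
    apply le_min <;> positivity
  have hg : Summable (fun i : ℕ => (N : ℝ) * (t * μ) ^ i * exp t / i.factorial) := by
    have := (Real.summable_pow_div_factorial (t * μ)).mul_left ((N : ℝ) * exp t)
    convert this using 2 with i
    rfl
    ring
  have hfs : Summable f := by
    refine Summable.of_nonneg_of_le hf_nonneg (fun i => min_le_right _ _) hg
  rw [← Summable.sum_add_tsum_nat_add l hfs]
  -- first part
  have h1 : ∀ i ∈ Finset.range l, f i ≤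
      N * (t * μ) ^ l * exp ((γ * (W₀ + 2 * l) + 1) * t) / (Nat.factorial l) := by
    intro i hi
    refine (min_le_left _ _).trans ?_
    apply div_le_div_of_nonneg_right ?_ (by positivity)
    apply mul_le_mul_of_nonneg_left ?_ (by positivity)
    apply Real.exp_le_exp.2
    apply mul_le_mul_of_nonneg_right ?_ ht
    have : (i : ℝ) ≤ l := by
      exact_mod_cast (Finset.mem_range.1 hi).le
    nlinarith [hγ.le, hW]
  have hsum1 : (∑ i ∈ Finset.range l, f i) ≤
      N * (t * μ) ^ l * exp ((γ * (W₀ + 2 * l) + 1) * t) / (Nat.factorial (l - 1)) := by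
    calc (∑ i ∈ Finset.range l, f i)
        ≤ ∑ _i ∈ Finset.range l,
            N * (t * μ) ^ l * exp ((γ * (W₀ + 2 * l) + 1) * t) / (Nat.factorial l) :=
          Finset.sum_le_sum h1
      _ = l * (N * (t * μ) ^ l * exp ((γ * (W₀ + 2 * l) + 1) * t) / (Nat.factorial l)) := by
          simp [Finset.sum_const, mul_comm]
      _ = N * (t * μ) ^ l * exp ((γ * (W₀ + 2 * l) + 1) * t) / (Nat.factorial (l - 1)) := by
          have hfac : (l.factorial : ℝ) = l * (l - 1).factorial := by
            rw [← Nat.succ_pred_eq_of_pos hl]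
            push_cast [Nat.factorial_succ]
            simp [Nat.succ_pred_eq_of_pos hl]
          rw [hfac]
          have hl0 : (0:ℝ) < l := by exact_mod_cast hl
          have hfp : (0:ℝ) < (l-1).factorial := by exact_mod_cast (l-1).factorial_pos
          field_simp
  -- second part
  have hsum2 : (∑' j : ℕ, f (j + l)) ≤
      N * (t * μ) ^ l * exp ((μ + 1) * t) / (Nat.factorial (l - 1)) := by
    have step1 : (∑' j : ℕ, f (j + l)) ≤
        ∑' j : ℕ, (N : ℝ) * exp t * ((t*μ) ^ (l + j) / (Nat.factorial (l + j))) := by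
      refine Summable.tsum_le_tsum (fun j => ?_) (hfs.comp_injective (add_left_injective l)) ?_
      · refine (min_le_right _ _).trans (le_of_eq ?_)
        rw [add_comm j l]; ring
      · exact ((Real.summable_pow_div_factorial (t*μ)).comp_injective
          (add_right_injective l)).mul_left _
    refine step1.trans ?_
    rw [tsum_mul_left]
    have := tail_tsum_le (t*μ) hx l
    calc (N : ℝ) * exp t * (∑' j : ℕ, (t*μ) ^ (l + j) / (Nat.factorial (l + j)))
        ≤ (N : ℝ) * exp t * ((t*μ) ^ l / l.factorial * Real.exp (t*μ)) := by
          apply mul_le_mul_of_nonneg_left this (by positivity)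
      _ = N * (t * μ) ^ l * exp ((μ + 1) * t) / (Nat.factorial l) := by
          rw [show (N:ℝ) * exp t * ((t*μ)^l / l.factorial * Real.exp (t*μ)) =
              (N:ℝ) * (t*μ)^l * (Real.exp t * Real.exp (t*μ)) / l.factorial from by ring,
            ← Real.exp_add, show t + t * μ = (μ + 1) * t from by ring]
      _ ≤ N * (t * μ) ^ l * exp ((μ + 1) * t) / (Nat.factorial (l - 1)) := by
          apply div_le_div_of_nonneg_left (by positivity)
            (by exact_mod_cast (l-1).factorial_pos)
          exact_mod_cast Nat.factorial_le (Nat.sub_le l 1)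
  -- combine
  have hEbig1 : exp ((γ * (W₀ + 2 * l) + 1) * t) ≤ exp ((γ * (W₀ + 2 * l) + μ + 1) * t) := by
    apply Real.exp_le_exp.2
    nlinarith [hμ.le]
  have hEbig2 : exp ((μ + 1) * t) ≤ exp ((γ * (W₀ + 2 * l) + μ + 1) * t) := by
    apply Real.exp_le_exp.2
    have : (0:ℝ) ≤ γ * (W₀ + 2 * l) := by positivity
    nlinarith
  have hfp : (0:ℝ) < (l-1).factorial := by exact_mod_cast (l-1).factorial_pos
  have := add_le_add hsum1 hsum2
  refine (add_le_add hsum1 hsum2).trans ?_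
  rw [← add_div, div_le_div_iff₀ hfp hfp]
  have h1' : N * (t * μ) ^ l * exp ((γ * (W₀ + 2 * l) + 1) * t) ≤
      N * (t * μ) ^ l * exp ((γ * (W₀ + 2 * l) + μ + 1) * t) :=
    mul_le_mul_of_nonneg_left hEbig1 (by positivity)
  have h2' : N * (t * μ) ^ l * exp ((μ + 1) * t) ≤
      N * (t * μ) ^ l * exp ((γ * (W₀ + 2 * l) + μ + 1) * t) :=
    mul_le_mul_of_nonneg_left hEbig2 (by positivity)
  nlinarith [hfp]
end
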